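/- Let $K$ be a number field, $F \in \mathcal{O}_K[x,y]$ a binary cubic with nonzero discriminant $\Delta_F$, and $S_F$ a finite set of primes containing all primes dividing $2\Delta_F$. Let $E/K$ be an elliptic curve whose conductor is supported on $S_F$ and suppose $j(E) = -2^8 H(x_1,y_1)^3/(\Delta_F F(x_1,y_1)^2)$ for some $x_1, y_1 \in \mathcal{O}_K$ coprime outside $S_F$ with $F(x_1,y_1) \neq 0$. Then $F(x_1,y_1)$ is an $S_F$-unit of $\mathcal{O}_K$. -/

import Mathlib

open MvPolynomial NumberField IsDedekindDomain

private lemma bezout_aux {R : Type*} [CommRing R] (a0 a1 a2 a3 x y f g Δ : R)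
    (hf : f = a0*x^3 + a1*x^2*y + a2*x*y^2 + a3*y^3)
    (hg : g = (12*a0*a2 - 4*a1^2)*x^2 + (36*a0*a3 - 4*a1*a2)*x*y + (12*a1*a3 - 4*a2^2)*y^2)
    (hΔ : Δ = 18*a0*a1*a2*a3 + (a1*a2)^2 - 27*(a0*a3)^2 - 4*a0*a2^3 - 4*a1^3*a3) :
    4*((-3*a0*a1^4*a2^2 + 12*a0*a1^5*a3 + 21*a0^2*a1^2*a2^3 - 90*a0^2*a1^3*a2*a3 - 36*a0^3*a2^4
        + 162*a0^3*a1*a2^2*a3 + 81*a0^3*a1^2*a3^2 - 243*a0^4*a2*a3^2)*x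
      + (a1^5*a2^2 - 4*a1^6*a3 - 10*a0*a1^3*a2^3 + 42*a0*a1^4*a2*a3 + 24*a0^2*a1*a2^4
        - 81*a0^2*a1^2*a2^2*a3 - 135*a0^2*a1^3*a3^2 - 108*a0^3*a2^3*a3 + 648*a0^3*a1*a2*a3^2
        - 729*a0^4*a3^3)*y)*f
    + ((-3*a0^2*a1^2*a2^2 + 12*a0^2*a1^3*a3 + 12*a0^3*a2^3 - 54*a0^3*a1*a2*a3 + 81*a0^4*a3^2)*x^2
      + (-2*a0*a1^3*a2^2 + 8*a0*a1^4*a3 + 8*a0^2*a1*a2^3 - 36*a0^2*a1^2*a2*a3 + 54*a0^3*a1*a3^2)*x*y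
      + (a1^4*a2^2 - 4*a1^5*a3 - 8*a0*a1^2*a2^3 + 34*a0*a1^3*a2*a3 + 16*a0^2*a2^4
        - 72*a0^2*a1*a2^2*a3 - 27*a0^2*a1^2*a3^2 + 108*a0^3*a2*a3^2)*y^2)*g
    = -(4*Δ^2*y^4) := by
  subst hf hg hΔ; ring


/-- **Lemma (conds).** Let `K` be a number field, `F ∈ 𝓞 K[x,y]` a binary cubic with
nonzero discriminant `Δ_F`, and `S_F` a finite set of (finite) primes of `K` containing all
primes dividing `2Δ_F`. Let `E/K` be an elliptic curve whose conductor is supported on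
`S_F` (equivalently, by semistability considerations, whose `j`-invariant `c₄³/Δ` is
integral at every prime outside `S_F`), and suppose
`j(E) = -2⁸H(x₁,y₁)³/(Δ_F·F(x₁,y₁)²)` for some `x₁, y₁ ∈ 𝓞 K` coprime outside `S_F` with
`F(x₁,y₁) ≠ 0`. Then `F(x₁,y₁)` is an `S_F`-unit: `v(F(x₁,y₁)) = 0` for every prime
`v ∉ S_F`. -/
theorem value_is_S_unit (K : Type*) [Field K] [NumberField K]
    (α₀ α₁ α₂ α₃ : 𝓞 K)
    (F : MvPolynomial (Fin 2) (𝓞 K))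
    (hF : F = C α₀ * X 0 ^ 3 + C α₁ * X 0 ^ 2 * X 1 + C α₂ * X 0 * X 1 ^ 2 + C α₃ * X 1 ^ 3)
    (Δ : 𝓞 K)
    (hΔ : Δ = 18 * α₀ * α₁ * α₂ * α₃ + (α₁ * α₂) ^ 2 - 27 * (α₀ * α₃) ^ 2
      - 4 * α₀ * α₂ ^ 3 - 4 * α₁ ^ 3 * α₃)
    (hΔ0 : Δ ≠ 0)
    (H : MvPolynomial (Fin 2) (𝓞 K))
    (hH : C 4 * H = pderiv 0 (pderiv 0 F) * pderiv 1 (pderiv 1 F) - pderiv 1 (pderiv 0 F) ^ 2)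
    (S : Set (HeightOneSpectrum (𝓞 K))) (hSfin : S.Finite)
    (hS2Δ : ∀ v : HeightOneSpectrum (𝓞 K), 2 * Δ ∈ v.asIdeal → v ∈ S)
    (E : WeierstrassCurve K) (hE : E.IsElliptic)
    -- the conductor of `E` is supported on `S_F`: no potentially multiplicative
    -- reduction outside `S_F`, i.e. the `j`-invariant is integral at every `v ∉ S_F`
    (hcond : ∀ v : HeightOneSpectrum (𝓞 K), v ∉ S → v.valuation K (E.c₄ ^ 3 / E.Δ) ≤ 1)
    (x₁ y₁ : 𝓞 K)
    (hcop : ∀ v : HeightOneSpectrum (𝓞 K), v ∉ S → ¬(x₁ ∈ v.asIdeal ∧ y₁ ∈ v.asIdeal))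
    (hF0 : MvPolynomial.eval ![x₁, y₁] F ≠ 0)
    (hj : E.c₄ ^ 3 / E.Δ =
      algebraMap (𝓞 K) K (-2 ^ 8 * MvPolynomial.eval ![x₁, y₁] H ^ 3) /
        algebraMap (𝓞 K) K (Δ * MvPolynomial.eval ![x₁, y₁] F ^ 2)) :
    ∀ v : HeightOneSpectrum (𝓞 K), v ∉ S →
      v.intValuation (MvPolynomial.eval ![x₁, y₁] F) = 1 := by
  intro v hv
  have hvp : v.asIdeal.IsPrime := v.isPrime
  have h2Δ : (2 : 𝓞 K) * Δ ∉ v.asIdeal := fun h => hv (hS2Δ v h)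
  have h2 : (2 : 𝓞 K) ∉ v.asIdeal := fun h => h2Δ (Ideal.mul_mem_right _ _ h)
  have hΔv : Δ ∉ v.asIdeal := fun h => h2Δ (Ideal.mul_mem_left _ _ h)
  have key : ∀ r : 𝓞 K, v.intValuation r < 1 ↔ r ∈ v.asIdeal := by
    intro r
    rw [v.intValuation_lt_one_iff_dvd, Ideal.dvd_span_singleton]
  have keyone : ∀ r : 𝓞 K, r ∉ v.asIdeal → v.intValuation r = 1 := by
    intro r hr
    rcases lt_or_eq_of_le (v.intValuation_le_one r) with h | h
    · exact absurd ((key r).mp (by rwa [HeightOneSpectrum.intValuation_apply])) hr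
    · exact h
  set a := MvPolynomial.eval ![x₁, y₁] F with ha
  set b := MvPolynomial.eval ![x₁, y₁] H with hb
  by_contra hne
  have hfa : a ∈ v.asIdeal := by
    rcases lt_or_eq_of_le (v.intValuation_le_one a) with h | h
    · exact (key a).mp (by rwa [HeightOneSpectrum.intValuation_apply])
    · exact absurd h hne
  -- Step 1: from integrality of j at v, deduce v ∣ H(x₁,y₁)
  have hd0 : Δ * a ^ 2 ≠ 0 := mul_ne_zero hΔ0 (pow_ne_zero _ hF0)
  have hcv := hcond v hv
  rw [hj, map_div₀, HeightOneSpectrum.valuation_of_algebraMap, HeightOneSpectrum.valuation_of_algebraMap] at hcv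
  have hdne : v.intValuation (Δ * a ^ 2) ≠ 0 := by
    rw [HeightOneSpectrum.intValuation_apply]; exact v.intValuation_ne_zero _ hd0
  have hle : v.intValuation (-2 ^ 8 * b ^ 3) ≤ v.intValuation (Δ * a ^ 2) :=
    (div_le_one₀ (zero_lt_iff.mpr hdne)).mp hcv
  have hnum : v.intValuation (-2 ^ 8 * b ^ 3) = v.intValuation b ^ 3 := by
    rw [show (-2 ^ 8 * b ^ 3 : 𝓞 K) = -(2 ^ 8 * b ^ 3) by ring, Valuation.map_neg, map_mul,
      map_pow, map_pow, keyone 2 h2, one_pow, one_mul]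
  have hden_lt : v.intValuation (Δ * a ^ 2) < 1 := by
    refine (key _).mpr ?_
    exact Ideal.mul_mem_left _ _ (Ideal.pow_mem_of_mem _ hfa 2 (by norm_num))
  have hbmem : b ∈ v.asIdeal := by
    refine hvp.mem_of_pow_mem 3 ((key (b ^ 3)).mp ?_)
    rw [map_pow, ← hnum]
    exact lt_of_le_of_lt hle hden_lt
  -- Step 2: compute 4·H(x₁,y₁) explicitly
  have e10 : pderiv (0 : Fin 2) (X 1 : MvPolynomial (Fin 2) (𝓞 K)) = 0 :=
    pderiv_X_of_ne (by decide)
  have e01 : pderiv (1 : Fin 2) (X 0 : MvPolynomial (Fin 2) (𝓞 K)) = 0 :=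
    pderiv_X_of_ne (by decide)
  have p2 : (pderiv (0:Fin 2)) (2 : MvPolynomial (Fin 2) (𝓞 K)) = 0 := by
    rw [← map_ofNat (C : 𝓞 K →+* MvPolynomial (Fin 2) (𝓞 K)) 2]; exact pderiv_C
  have p3 : (pderiv (0:Fin 2)) (3 : MvPolynomial (Fin 2) (𝓞 K)) = 0 := by
    rw [← map_ofNat (C : 𝓞 K →+* MvPolynomial (Fin 2) (𝓞 K)) 3]; exact pderiv_C
  have q2 : (pderiv (1:Fin 2)) (2 : MvPolynomial (Fin 2) (𝓞 K)) = 0 := by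
    rw [← map_ofNat (C : 𝓞 K →+* MvPolynomial (Fin 2) (𝓞 K)) 2]; exact pderiv_C
  have q3 : (pderiv (1:Fin 2)) (3 : MvPolynomial (Fin 2) (𝓞 K)) = 0 := by
    rw [← map_ofNat (C : 𝓞 K →+* MvPolynomial (Fin 2) (𝓞 K)) 3]; exact pderiv_C
  have h0 : pderiv 0 F = C α₀ * (C 3 * X 0 ^ 2) + C α₁ * (C 2 * X 0) * X 1 + C α₂ * X 1 ^ 2 := by
    rw [hF]
    simp only [map_add, pderiv_C_mul, pderiv_mul, pderiv_pow, pderiv_C, pderiv_X_self, e10, e01,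
      Derivation.leibniz_pow, smul_eq_mul, map_ofNat]
    ring
  have h1 : pderiv 1 F = C α₁ * X 0 ^ 2 + C α₂ * X 0 * (C 2 * X 1) + C α₃ * (C 3 * X 1 ^ 2) := by
    rw [hF]
    simp only [map_add, pderiv_C_mul, pderiv_mul, pderiv_pow, pderiv_C, pderiv_X_self, e10, e01,
      Derivation.leibniz_pow, smul_eq_mul, map_ofNat]
    ring
  have h00 : pderiv 0 (pderiv 0 F) = C (6 * α₀) * X 0 + C (2 * α₁) * X 1 := by
    rw [h0]
    simp only [map_add, pderiv_C_mul, pderiv_mul, pderiv_pow, pderiv_C, pderiv_X_self, e10, e01,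
      Derivation.leibniz_pow, smul_eq_mul, map_mul, map_ofNat, p2, p3, q2, q3]
    push_cast [C_mul]
    ring
  have h11 : pderiv 1 (pderiv 1 F) = C (2 * α₂) * X 0 + C (6 * α₃) * X 1 := by
    rw [h1]
    simp only [map_add, pderiv_C_mul, pderiv_mul, pderiv_pow, pderiv_C, pderiv_X_self, e10, e01,
      Derivation.leibniz_pow, smul_eq_mul, map_mul, map_ofNat, p2, p3, q2, q3]
    push_cast [C_mul]
    ring
  have h01 : pderiv 1 (pderiv 0 F) = C (2 * α₁) * X 0 + C (2 * α₂) * X 1 := by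
    rw [h0]
    simp only [map_add, pderiv_C_mul, pderiv_mul, pderiv_pow, pderiv_C, pderiv_X_self, e10, e01,
      Derivation.leibniz_pow, smul_eq_mul, map_mul, map_ofNat, p2, p3, q2, q3]
    push_cast [C_mul]
    ring
  have hg4 : (4 : 𝓞 K) * b =
      (12*α₀*α₂ - 4*α₁^2)*x₁^2 + (36*α₀*α₃ - 4*α₁*α₂)*x₁*y₁ + (12*α₁*α₃ - 4*α₂^2)*y₁^2 := by
    have h := congrArg (MvPolynomial.eval ![x₁, y₁]) hH
    rw [h00, h11, h01] at h
    simp only [map_mul, map_add, map_sub, map_pow, eval_C, eval_X, Matrix.cons_val_zero,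
      Matrix.cons_val_one, Matrix.head_cons] at h
    rw [← hb] at h
    rw [h]; ring
  have hfe : a = α₀*x₁^3 + α₁*x₁^2*y₁ + α₂*x₁*y₁^2 + α₃*y₁^3 := by
    rw [ha, hF]
    simp only [map_mul, map_add, map_pow, eval_C, eval_X, Matrix.cons_val_zero,
      Matrix.cons_val_one, Matrix.head_cons]
  -- Step 3: resultant identities force v ∣ x₁ and v ∣ y₁
  have hgmem : ((12*α₀*α₂ - 4*α₁^2)*x₁^2 + (36*α₀*α₃ - 4*α₁*α₂)*x₁*y₁
      + (12*α₁*α₃ - 4*α₂^2)*y₁^2 : 𝓞 K) ∈ v.asIdeal := by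
    rw [← hg4]; exact Ideal.mul_mem_left _ _ hbmem
  have split4 : ∀ r : 𝓞 K, 4 * Δ ^ 2 * r ^ 4 ∈ v.asIdeal → r ∈ v.asIdeal := by
    intro r hr
    rcases hvp.mem_or_mem hr with h | h
    · rcases hvp.mem_or_mem h with h | h
      · exact absurd (hvp.mem_of_pow_mem 2 (by rwa [show (4 : 𝓞 K) = 2 ^ 2 by norm_num] at h)) h2
      · exact absurd (hvp.mem_of_pow_mem 2 h) hΔv
    · exact hvp.mem_of_pow_mem 4 h
  have hy : y₁ ∈ v.asIdeal := by
    have hid := bezout_aux α₀ α₁ α₂ α₃ x₁ y₁ a _ Δ hfe rfl hΔ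
    refine split4 y₁ ?_
    rw [← neg_mem_iff, ← hid]
    exact Ideal.add_mem _ (Ideal.mul_mem_left _ _ hfa) (Ideal.mul_mem_left _ _ hgmem)
  have hx : x₁ ∈ v.asIdeal := by
    have hid := bezout_aux α₃ α₂ α₁ α₀ y₁ x₁ a
      ((12*α₃*α₁ - 4*α₂^2)*y₁^2 + (36*α₃*α₀ - 4*α₂*α₁)*y₁*x₁ + (12*α₂*α₀ - 4*α₁^2)*x₁^2)
      Δ (by rw [hfe]; ring) rfl (by rw [hΔ]; ring)
    refine split4 x₁ ?_
    rw [← neg_mem_iff, ← hid]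
    refine Ideal.add_mem _ (Ideal.mul_mem_left _ _ hfa) (Ideal.mul_mem_left _ _ ?_)
    rw [show ((12*α₃*α₁ - 4*α₂^2)*y₁^2 + (36*α₃*α₀ - 4*α₂*α₁)*y₁*x₁ + (12*α₂*α₀ - 4*α₁^2)*x₁^2 : 𝓞 K)
      = (12*α₀*α₂ - 4*α₁^2)*x₁^2 + (36*α₀*α₃ - 4*α₁*α₂)*x₁*y₁ + (12*α₁*α₃ - 4*α₂^2)*y₁^2 by ring]
    exact hgmem
  exact hcop v hv ⟨hx, hy⟩
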